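/- In a commutative unitary ring with finitely many ideals that is not a field, every maximal ideal has a nonzero annihilator. -/

import Mathlib

theorem maximal_ideal_annihilator_ne_bot (R : Type*) [CommRing R] [Nontrivial R]
    [Finite (Ideal R)] (hR : ¬ IsField R) (M : Ideal R) (hM : M.IsMaximal) :
    M.annihilator ≠ ⊥ := by
  classical
  have hNoeth : IsNoetherian R R := isNoetherian_iff'.mpr inferInstance
  obtain ⟨i, j, hne, heq⟩ := Finite.exists_ne_map_eq_of_infinite (fun k : ℕ => M ^ (k + 1))
  wlog hij : i < j generalizing i j
  · exact this j i hne.symm heq.symm (by omega)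
  set n := i + 1 with hn
  have hstab : M ^ n = M ^ (n + 1) := by
    refine le_antisymm ?_ (Ideal.pow_le_pow_right (by omega))
    calc M ^ n = M ^ (j + 1) := heq
      _ ≤ M ^ (n + 1) := Ideal.pow_le_pow_right (by omega)
  have hall : ∀ k, M ^ (n + k) = M ^ n := by
    intro k
    induction k with
    | zero => rfl
    | succ k ih => rw [← add_assoc, pow_succ, ih, ← pow_succ, ← hstab]
  set N := M ^ n with hNdef
  have hNN : N * N = N := by rw [hNdef, ← pow_add, hall]
  have hfg : N.FG := IsNoetherian.noetherian N
  obtain ⟨r, hr1, hr0⟩ :=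
    Submodule.exists_sub_one_mem_and_smul_eq_zero_of_fg_of_le_smul N N hfg
      (by rw [smul_eq_mul, hNN])
  have hrmul : ∀ y ∈ N, r * y = 0 := fun y hy => by simpa using hr0 y hy
  have heN : (1 : R) - r ∈ N := by simpa using N.neg_mem hr1
  have hre : r * (1 - r) = 0 := hrmul _ heN
  have hNleM : N ≤ M := hNdef ▸ Ideal.pow_le_self (by omega)
  set J := Ideal.span {r} * M with hJdef
  have hrN : Ideal.span {r} * N = ⊥ := by
    rw [eq_bot_iff, Ideal.mul_le]
    intro a ha b hb
    obtain ⟨c, rfl⟩ := Ideal.mem_span_singleton'.mp ha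
    simp [Ideal.mem_bot, mul_assoc, hrmul b hb]
  have hJn : J ^ n = ⊥ := by
    rw [eq_bot_iff, hJdef, mul_pow]
    calc Ideal.span {r} ^ n * M ^ n
        ≤ Ideal.span {r} * N := Ideal.mul_mono (Ideal.pow_le_self (by omega)) le_rfl
      _ = ⊥ := hrN
  rw [Submodule.ne_bot_iff]
  by_cases hJ : J = ⊥
  · refine ⟨r, ?_, ?_⟩
    · rw [Submodule.mem_annihilator]
      intro a ha
      have hmem : r * a ∈ J := Ideal.mul_mem_mul (Ideal.mem_span_singleton_self r) ha
      rw [hJ, Ideal.mem_bot] at hmem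
      simpa using hmem
    · intro h0
      apply hM.ne_top
      have h1 : (1 : R) ∈ N := by simpa [h0] using heN
      exact (Ideal.eq_top_iff_one M).mpr (hNleM h1)
  · have hex : ∃ m, J ^ m = ⊥ := ⟨n, hJn⟩
    have hk0 : J ^ Nat.find hex = ⊥ := Nat.find_spec hex
    set k := Nat.find hex with hk
    have hk2 : 2 ≤ k := by
      by_contra h
      interval_cases k
      · simp at hk0
      · exact hJ (by simpa using hk0)
    have hkm : J ^ (k - 1) ≠ ⊥ := Nat.find_min hex (by omega)
    obtain ⟨y, hyJ, hy0⟩ := (Submodule.ne_bot_iff _).mp hkm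
    have hyr : y ∈ Ideal.span {r} := by
      have hyJ' : y ∈ J := Ideal.pow_le_self (I := J) (n := k - 1) (by omega) hyJ
      exact Ideal.mul_le_left (show y ∈ Ideal.span {r} * M by rw [← hJdef]; exact hyJ')
    obtain ⟨c, hc⟩ := Ideal.mem_span_singleton'.mp hyr
    refine ⟨y, ?_, hy0⟩
    rw [Submodule.mem_annihilator]
    intro a ha
    have h1 : y * ((1 - r) * a) = 0 := by
      rw [← hc]
      calc c * r * ((1 - r) * a) = c * a * (r * (1 - r)) := by ring
        _ = 0 := by rw [hre, mul_zero]
    have h2 : y * (r * a) = 0 := by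
      have hra : r * a ∈ J := Ideal.mul_mem_mul (Ideal.mem_span_singleton_self r) ha
      have : y * (r * a) ∈ J ^ (k - 1) * J := Ideal.mul_mem_mul hyJ hra
      rw [← pow_succ, Nat.sub_add_cancel (by omega), hk0, Ideal.mem_bot] at this
      exact this
    have h3 : y * a = y * ((1 - r) * a) + y * (r * a) := by ring
    rw [smul_eq_mul, h3, h1, h2, add_zero]
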